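/- arXiv:0909.3653 — 4 statements merged into one kernel-verified Lean document; each statement's English description precedes it below -/
import Mathlib

section
/- For every real number c ≥ 0, the integral of e^{−cξ}·ξ^{1/2}/(1+e^{ξ}) over ξ from 0 to ∞ equals Γ(3/2)·[2^{−1/2}·ζ(3/2, (c+1)/2) − ζ(3/2, c+1)], where ζ(s, q) denotes the Hurwitz zeta function. -/
open MeasureTheory Real Set

/-- The Hurwitz zeta function for real s > 1 and q > 0, defined by its series
ζ(s, q) = Σ_{n=0}^∞ (n+q)^{−s}. -/
noncomputable def hurwitzZetaReal (s q : ℝ) : ℝ := ∑' n : ℕ, 1 / ((n : ℝ) + q) ^ s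

lemma summable_shift {q : ℝ} (hq : 0 < q) :
    Summable (fun n : ℕ => 1 / ((n : ℝ) + q) ^ ((3:ℝ)/2)) := by
  have h := (Real.summable_one_div_nat_add_rpow q (3/2)).2 (by norm_num)
  refine h.congr fun n => ?_
  rw [abs_of_pos (by positivity)]

lemma gammaKernel_integrableOn {a : ℝ} (ha : 0 < a) :
    IntegrableOn (fun ξ : ℝ => ξ ^ ((1:ℝ)/2) * Real.exp (-(a * ξ))) (Ioi 0) := by
  have h0 : IntegrableOn (fun x : ℝ => Real.exp (-x) * x ^ ((1:ℝ)/2)) (Ioi 0) := by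
    have h := Real.GammaIntegral_convergent (s := 3/2) (by norm_num)
    refine h.congr_fun (fun x hx => by norm_num) measurableSet_Ioi
  have h1 : IntegrableOn (fun x : ℝ => Real.exp (-(a*x)) * (a*x) ^ ((1:ℝ)/2)) (Ioi 0) := by
    have h2 := (integrableOn_Ioi_comp_mul_left_iff
      (fun x : ℝ => Real.exp (-x) * x ^ ((1:ℝ)/2)) 0 ha).2
    simpa using h2 (by simpa using h0)
  refine IntegrableOn.congr_fun (h1.const_mul (a ^ (-((1:ℝ)/2)))) (fun x hx => ?_)
    measurableSet_Ioi
  have hx0 : (0:ℝ) < x := hx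
  have h3 : a ^ ((1:ℝ)/2) ≠ 0 := (Real.rpow_pos_of_pos ha _).ne'
  rw [Real.mul_rpow ha.le hx0.le, Real.rpow_neg ha.le]
  field_simp

lemma gammaKernel_integral {a : ℝ} (ha : 0 < a) :
    ∫ ξ in Ioi 0, ξ ^ ((1:ℝ)/2) * Real.exp (-(a * ξ)) =
      Real.Gamma (3/2) * (1 / a ^ ((3:ℝ)/2)) := by
  have h := Real.integral_rpow_mul_exp_neg_mul_Ioi (a := (3:ℝ)/2) (r := a) (by norm_num) ha
  rw [show (3:ℝ)/2 - 1 = 1/2 by norm_num] at h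
  rw [h, Real.div_rpow zero_le_one ha.le, Real.one_rpow]
  ring

/-- for real c ≥ 0,
∫_0^∞ e^{−cξ}·ξ^{1/2}/(1+e^ξ) dξ = Γ(3/2)·[2^{−1/2}·ζ(3/2,(c+1)/2) − ζ(3/2,c+1)]. -/
theorem fermiDirac_half_exp_hurwitz (c : ℝ) (hc : 0 ≤ c) :
    (∫ ξ in Set.Ioi (0 : ℝ), Real.exp (-c * ξ) * ξ ^ ((1 : ℝ) / 2) / (1 + Real.exp ξ)) =
      Real.Gamma (3 / 2) *
        ((2 : ℝ) ^ (-(1 : ℝ) / 2) * hurwitzZetaReal (3 / 2) ((c + 1) / 2) -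
          hurwitzZetaReal (3 / 2) (c + 1)) := by
  set Γ := Real.Gamma (3/2) with hΓ
  set q₁ : ℝ := (c+1)/2 with hq₁def
  set q₂ : ℝ := (c+2)/2 with hq₂def
  have hq₁ : 0 < q₁ := by rw [hq₁def]; linarith
  have hq₂ : 0 < q₂ := by rw [hq₂def]; linarith
  set A : ℕ → ℝ := fun k => c + (2*(k:ℝ)+1) with hAdef
  set B : ℕ → ℝ := fun k => c + (2*(k:ℝ)+2) with hBdef
  have hA : ∀ k, 0 < A k := fun k => by
    have : (0:ℝ) ≤ (k:ℝ) := Nat.cast_nonneg k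
    simp only [hAdef]; linarith
  have hB : ∀ k, 0 < B k := fun k => by
    have : (0:ℝ) ≤ (k:ℝ) := Nat.cast_nonneg k
    simp only [hBdef]; linarith
  set F : ℕ → ℝ → ℝ := fun k ξ =>
    ξ ^ ((1:ℝ)/2) * Real.exp (-(A k * ξ)) - ξ ^ ((1:ℝ)/2) * Real.exp (-(B k * ξ)) with hFdef
  set U : ℕ → ℝ := fun k => 1 / (A k) ^ ((3:ℝ)/2) with hUdef
  set V : ℕ → ℝ := fun k => 1 / (B k) ^ ((3:ℝ)/2) with hVdef
  -- integrability and integral values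
  have hFint : ∀ k, IntegrableOn (F k) (Ioi 0) := fun k =>
    (gammaKernel_integrableOn (hA k)).sub (gammaKernel_integrableOn (hB k))
  have hFval : ∀ k, ∫ ξ in Ioi 0, F k ξ = Γ * U k - Γ * V k := by
    intro k
    rw [hFdef]
    rw [integral_sub (gammaKernel_integrableOn (hA k)) (gammaKernel_integrableOn (hB k)),
      gammaKernel_integral (hA k), gammaKernel_integral (hB k)]
  have hFnonneg : ∀ k, ∀ ξ ∈ Ioi (0:ℝ), 0 ≤ F k ξ := by
    intro k ξ hξ
    have hξ0 : (0:ℝ) < ξ := hξ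
    have hexp : Real.exp (-(B k * ξ)) ≤ Real.exp (-(A k * ξ)) := by
      apply Real.exp_le_exp.2
      have : A k ≤ B k := by simp only [hAdef, hBdef]; linarith
      nlinarith
    have hpow : (0:ℝ) ≤ ξ ^ ((1:ℝ)/2) := Real.rpow_nonneg hξ0.le _
    simp only [hFdef, sub_nonneg]
    exact mul_le_mul_of_nonneg_left hexp hpow
  -- expressing U and V via shifted sums
  have hUeq : ∀ k : ℕ, U k = (2:ℝ) ^ (-(3:ℝ)/2) * (1 / ((k:ℝ) + q₁) ^ ((3:ℝ)/2)) := by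
    intro k
    have h2 : A k = 2 * ((k:ℝ) + q₁) := by simp only [hAdef, hq₁def]; ring
    have hk : (0:ℝ) < (k:ℝ) + q₁ := by positivity
    rw [hUdef]
    simp only
    rw [h2, Real.mul_rpow (by norm_num) hk.le,
      show (-(3:ℝ)/2) = -((3:ℝ)/2) by norm_num, Real.rpow_neg (by norm_num)]
    ring
  have hVeq : ∀ k : ℕ, V k = (2:ℝ) ^ (-(3:ℝ)/2) * (1 / ((k:ℝ) + q₂) ^ ((3:ℝ)/2)) := by
    intro k
    have h2 : B k = 2 * ((k:ℝ) + q₂) := by simp only [hBdef, hq₂def]; ring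
    have hk : (0:ℝ) < (k:ℝ) + q₂ := by positivity
    rw [hVdef]
    simp only
    rw [h2, Real.mul_rpow (by norm_num) hk.le,
      show (-(3:ℝ)/2) = -((3:ℝ)/2) by norm_num, Real.rpow_neg (by norm_num)]
    ring
  have hU : Summable U :=
    ((summable_shift hq₁).mul_left _).congr (fun k => (hUeq k).symm)
  have hV : Summable V :=
    ((summable_shift hq₂).mul_left _).congr (fun k => (hVeq k).symm)
  -- the tsum of U
  have hUz : ∑' k, U k = (2:ℝ) ^ (-(3:ℝ)/2) * hurwitzZetaReal (3/2) q₁ := by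
    rw [hurwitzZetaReal, ← tsum_mul_left]
    exact tsum_congr hUeq
  -- even/odd split
  have hEO : (∑' k, U k) + (∑' k, V k) = hurwitzZetaReal (3/2) (c+1) := by
    have hfe : ∀ k : ℕ, (1 : ℝ) / (((2*k : ℕ):ℝ) + (c+1)) ^ ((3:ℝ)/2) = U k := by
      intro k
      have : (((2*k : ℕ):ℝ) + (c+1)) = A k := by simp only [hAdef]; push_cast; ring
      rw [this, hUdef]
    have hfo : ∀ k : ℕ, (1 : ℝ) / (((2*k+1 : ℕ):ℝ) + (c+1)) ^ ((3:ℝ)/2) = V k := by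
      intro k
      have : (((2*k+1 : ℕ):ℝ) + (c+1)) = B k := by simp only [hBdef]; push_cast; ring
      rw [this, hVdef]
    have he : Summable (fun k : ℕ => (1 : ℝ) / (((2*k : ℕ):ℝ) + (c+1)) ^ ((3:ℝ)/2)) :=
      hU.congr (fun k => (hfe k).symm)
    have ho : Summable (fun k : ℕ => (1 : ℝ) / (((2*k+1 : ℕ):ℝ) + (c+1)) ^ ((3:ℝ)/2)) :=
      hV.congr (fun k => (hfo k).symm)
    have := tsum_even_add_odd (f := fun n : ℕ => (1 : ℝ) / ((n:ℝ) + (c+1)) ^ ((3:ℝ)/2)) he ho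
    rw [tsum_congr hfe, tsum_congr hfo] at this
    rw [this, hurwitzZetaReal]
  -- pointwise series expansion of the integrand
  have hpt : ∀ ξ ∈ Ioi (0:ℝ),
      Real.exp (-c * ξ) * ξ ^ ((1:ℝ)/2) / (1 + Real.exp ξ) = ∑' k, F k ξ := by
    intro ξ hξ
    have hξ0 : (0:ℝ) < ξ := hξ
    set r := Real.exp (-ξ) with hr
    have hr0 : 0 < r := Real.exp_pos _
    have hr1 : r < 1 := by
      rw [hr, Real.exp_lt_one_iff]; linarith
    have hterm : ∀ k : ℕ,
        F k ξ = (ξ ^ ((1:ℝ)/2) * Real.exp (-c*ξ) * (r - r^2)) * (r^2)^k := by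
      intro k
      have e1 : Real.exp (-(A k * ξ)) = Real.exp (-c*ξ) * ((r^2)^k * r) := by
        rw [hr, ← pow_mul, ← pow_succ, ← Real.exp_nat_mul, ← Real.exp_add]
        congr 1
        simp only [hAdef]
        push_cast
        ring
      have e2 : Real.exp (-(B k * ξ)) = Real.exp (-c*ξ) * ((r^2)^k * r^2) := by
        rw [hr, ← pow_mul, ← pow_add, ← Real.exp_nat_mul, ← Real.exp_add]
        congr 1
        simp only [hBdef]
        push_cast
        ring
      simp only [hFdef]
      rw [e1, e2]
      ring
    have hgeom : ∑' k : ℕ, (r^2)^k = (1 - r^2)⁻¹ :=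
      tsum_geometric_of_lt_one (by positivity) (by nlinarith)
    calc Real.exp (-c * ξ) * ξ ^ ((1:ℝ)/2) / (1 + Real.exp ξ)
        = (ξ ^ ((1:ℝ)/2) * Real.exp (-c*ξ) * (r - r^2)) * (1 - r^2)⁻¹ := by
          have hE : Real.exp ξ = r⁻¹ := by rw [hr, Real.exp_neg, inv_inv]
          have h1r : 1 - r^2 ≠ 0 := by nlinarith
          have h1E : 1 + Real.exp ξ ≠ 0 := by positivity
          rw [hE]
          field_simp
          ring
      _ = ∑' k, F k ξ := by
          rw [← hgeom, ← tsum_mul_left]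
          exact (tsum_congr hterm).symm
  -- swap integral and sum
  have hnormint : ∀ k : ℕ, ∫ ξ in Ioi (0:ℝ), ‖F k ξ‖ = Γ * U k - Γ * V k := by
    intro k
    rw [← hFval k]
    exact setIntegral_congr_fun measurableSet_Ioi
      (fun ξ hξ => Real.norm_of_nonneg (hFnonneg k ξ hξ))
  have hsum : Summable (fun k : ℕ => ∫ ξ in Ioi (0:ℝ), ‖F k ξ‖) := by
    refine ((hU.mul_left Γ).sub (hV.mul_left Γ)).congr (fun k => (hnormint k).symm)
  have hswap :
      ∑' k, ∫ ξ in Ioi (0:ℝ), F k ξ = ∫ ξ in Ioi (0:ℝ), ∑' k, F k ξ :=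
    integral_tsum_of_summable_integral_norm hFint hsum
  -- put everything together
  rw [setIntegral_congr_fun measurableSet_Ioi hpt, ← hswap]
  have : ∑' k, ∫ ξ in Ioi (0:ℝ), F k ξ = Γ * (∑' k, U k) - Γ * (∑' k, V k) := by
    rw [tsum_congr hFval, Summable.tsum_sub (hU.mul_left Γ) (hV.mul_left Γ),
      tsum_mul_left, tsum_mul_left]
  rw [this]
  have hVz : ∑' k, V k = hurwitzZetaReal (3/2) (c+1) - ∑' k, U k := by
    linarith [hEO]
  rw [hVz, hUz]
  have h2 : (2:ℝ) * (2:ℝ) ^ (-(3:ℝ)/2) = (2:ℝ) ^ (-(1:ℝ)/2) := by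
    rw [show (-(1:ℝ)/2) = 1 + (-(3:ℝ)/2) by norm_num, Real.rpow_add two_pos, Real.rpow_one]
  linear_combination Γ * hurwitzZetaReal (3/2) q₁ * h2
end

section
/- For every natural number k ≥ 1 and every real number c ≥ 0, the integral of e^{−cξ}·ξ^{k/2}/(1+e^{ξ}) over ξ from 0 to ∞ equals Γ(1+k/2)·[2^{−k/2}·ζ(1+k/2, (c+1)/2) − ζ(1+k/2, c+1)], where ζ(s, q) denotes the Hurwitz zeta function. -/
open MeasureTheory Real Set

lemma summable_aux {s q : ℝ} (hs : 1 < s) (hq : 0 < q) :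
    Summable (fun n : ℕ => 1 / ((n : ℝ) + q) ^ s) := by
  have h1 : Summable (fun n : ℕ => 1 / ((n : ℝ) + 1) ^ s) := by
    have h0 := (Real.summable_one_div_nat_rpow (p := s)).2 hs
    have h2 := (summable_nat_add_iff (f := fun n : ℕ => 1 / (n : ℝ) ^ s) 1).2 h0
    simpa [Nat.cast_add] using h2
  set m := min q 1 with hm
  have hm0 : 0 < m := lt_min hq one_pos
  have key : ∀ n : ℕ, 1 / ((n : ℝ) + q) ^ s ≤ m ^ (-s) * (1 / ((n : ℝ) + 1) ^ s) := by
    intro n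
    have hn : (0:ℝ) ≤ n := n.cast_nonneg
    have hle : m * ((n : ℝ) + 1) ≤ (n : ℝ) + q := by
      have h3 : m ≤ q := min_le_left q 1
      have h4 : m ≤ 1 := min_le_right q 1
      nlinarith
    have h2' : m ^ s * ((n : ℝ) + 1) ^ s ≤ ((n : ℝ) + q) ^ s := by
      rw [← Real.mul_rpow hm0.le (by positivity)]
      exact Real.rpow_le_rpow (by positivity) hle (by linarith)
    calc 1 / ((n:ℝ)+q)^s ≤ 1 / (m^s * ((n:ℝ)+1)^s) :=
          one_div_le_one_div_of_le (by positivity) h2'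
      _ = m ^ (-s) * (1/((n:ℝ)+1)^s) := by
          rw [Real.rpow_neg hm0.le]; field_simp
  exact Summable.of_nonneg_of_le (fun n => by positivity) key (h1.mul_left _)

lemma int_aux {p a : ℝ} (hp : 0 ≤ p) (ha : 0 < a) :
    IntegrableOn (fun ξ : ℝ => ξ ^ p * Real.exp (-(a * ξ))) (Set.Ioi 0) := by
  have := integrableOn_rpow_mul_exp_neg_mul_rpow (s := p) (p := 1) (b := a)
    (by linarith) one_pos ha
  simpa [Real.rpow_one, neg_mul] using this

set_option maxHeartbeats 1000000 in
/-- for natural k ≥ 1 and real c ≥ 0,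
∫_0^∞ e^{−cξ}·ξ^{k/2}/(1+e^ξ) dξ
  = Γ(1+k/2)·[2^{−k/2}·ζ(1+k/2,(c+1)/2) − ζ(1+k/2,c+1)]. -/
theorem fermiDirac_general_exp_hurwitz (k : ℕ) (hk : 1 ≤ k) (c : ℝ) (hc : 0 ≤ c) :
    (∫ ξ in Set.Ioi (0 : ℝ), Real.exp (-c * ξ) * ξ ^ ((k : ℝ) / 2) / (1 + Real.exp ξ)) =
      Real.Gamma (1 + (k : ℝ) / 2) *
        ((2 : ℝ) ^ (-(k : ℝ) / 2) * hurwitzZetaReal (1 + (k : ℝ) / 2) ((c + 1) / 2) -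
          hurwitzZetaReal (1 + (k : ℝ) / 2) (c + 1)) := by
  have hk' : (1:ℝ) ≤ (k:ℝ) := by exact_mod_cast hk
  set p : ℝ := (k:ℝ)/2 with hpdef
  have hp : 0 < p := by positivity
  set s : ℝ := 1 + p with hsdef
  have hs : 1 < s := by simp only [hsdef]; linarith
  set F : ℕ → ℝ → ℝ := fun n ξ =>
    ξ ^ p * (Real.exp (-((c + 2*n + 1) * ξ)) - Real.exp (-((c + 2*n + 2) * ξ))) with hF
  have ha1 : ∀ n : ℕ, (0:ℝ) < c + 2*n + 1 := fun n => by positivity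
  have ha2 : ∀ n : ℕ, (0:ℝ) < c + 2*n + 2 := fun n => by positivity
  -- pointwise sum of the series
  have hptwise : ∀ ξ ∈ Set.Ioi (0:ℝ),
      ∑' n, F n ξ = Real.exp (-c * ξ) * ξ ^ p / (1 + Real.exp ξ) := by
    intro ξ hξ
    have hξ0 : 0 < ξ := hξ
    set u : ℝ := Real.exp (-ξ) with hu
    have hu0 : 0 < u := Real.exp_pos _
    have hu1 : u < 1 := by
      rw [hu, Real.exp_lt_one_iff]; linarith
    have huE : u * Real.exp ξ = 1 := by
      rw [hu, ← Real.exp_add]; simp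
    have key : ∀ n : ℕ, (u^2)^n = Real.exp ((n:ℝ) * (-2 * ξ)) := by
      intro n
      rw [hu, ← pow_mul, ← Real.exp_nat_mul]
      congr 1
      push_cast; ring
    have hterm : ∀ n : ℕ, F n ξ =
        (ξ ^ p * Real.exp (-c * ξ) * (u - u^2)) * (u^2)^n := by
      intro n
      have e1 : -((c + 2*(n:ℝ) + 1) * ξ) = (-c * ξ) + (-ξ) + (n:ℝ) * (-2 * ξ) := by ring
      have e2 : -((c + 2*(n:ℝ) + 2) * ξ) = (-c * ξ) + (-ξ) + (-ξ) + (n:ℝ) * (-2 * ξ) := by ring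
      simp only [hF, e1, e2, Real.exp_add, key n, ← hu]
      ring
    rw [tsum_congr hterm, tsum_mul_left, tsum_geometric_of_lt_one (by positivity)
      (by nlinarith)]
    have hden : 1 - u^2 ≠ 0 := by nlinarith
    have hden2 : 1 + Real.exp ξ ≠ 0 := by positivity
    have hgeo : (u - u^2) * (1 - u^2)⁻¹ = 1 / (1 + Real.exp ξ) := by
      field_simp
      linear_combination (1 - u) * huE
    rw [mul_assoc, hgeo]
    ring
  -- integrability of each term
  have hFint : ∀ n : ℕ, IntegrableOn (F n) (Set.Ioi 0) := by
    intro n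
    have hEq : F n = fun ξ => ξ ^ p * Real.exp (-((c + 2*(n:ℝ) + 1) * ξ))
        - ξ ^ p * Real.exp (-((c + 2*(n:ℝ) + 2) * ξ)) := by
      funext ξ; simp only [hF]; ring
    rw [hEq]
    exact (int_aux hp.le (ha1 n)).sub (int_aux hp.le (ha2 n))
  -- value of the basic integral
  have hval : ∀ a : ℝ, 0 < a → (∫ ξ in Set.Ioi (0:ℝ), ξ ^ p * Real.exp (-(a * ξ))) =
      Real.Gamma s * (1 / a ^ s) := by
    intro a ha
    have hps : p = s - 1 := by simp [hsdef]
    rw [hps, Real.integral_rpow_mul_exp_neg_mul_Ioi (by linarith) ha,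
      one_div, Real.inv_rpow ha.le, ← one_div, mul_comm]
  set g1 : ℕ → ℝ := fun n => 1 / (c + 2*(n:ℝ) + 1) ^ s with hg1
  set g2 : ℕ → ℝ := fun n => 1 / (c + 2*(n:ℝ) + 2) ^ s with hg2
  have hIntF : ∀ n : ℕ, (∫ ξ in Set.Ioi (0:ℝ), F n ξ) = Real.Gamma s * (g1 n - g2 n) := by
    intro n
    have hsplit : (∫ ξ in Set.Ioi (0:ℝ), F n ξ)
        = (∫ ξ in Set.Ioi (0:ℝ), ξ ^ p * Real.exp (-((c + 2*(n:ℝ) + 1) * ξ)))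
          - ∫ ξ in Set.Ioi (0:ℝ), ξ ^ p * Real.exp (-((c + 2*(n:ℝ) + 2) * ξ)) := by
      rw [← integral_sub (int_aux hp.le (ha1 n)) (int_aux hp.le (ha2 n))]
      apply setIntegral_congr_fun measurableSet_Ioi
      intro ξ _; simp only [hF]; ring
    rw [hsplit, hval _ (ha1 n), hval _ (ha2 n)]
    simp only [hg1, hg2]; ring
  have hnorm : ∀ n : ℕ, (∫ ξ in Set.Ioi (0:ℝ), ‖F n ξ‖) = Real.Gamma s * (g1 n - g2 n) := by
    intro n
    rw [← hIntF n]
    apply setIntegral_congr_fun measurableSet_Ioi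
    intro ξ hξ
    have hξ0 : (0:ℝ) < ξ := hξ
    have hle : Real.exp (-((c + 2*(n:ℝ) + 2) * ξ)) ≤ Real.exp (-((c + 2*(n:ℝ) + 1) * ξ)) := by
      apply Real.exp_le_exp.2; nlinarith
    have hpξ : (0:ℝ) ≤ ξ ^ p := by positivity
    have hFnn : 0 ≤ F n ξ := by simp only [hF]; nlinarith
    exact Real.norm_of_nonneg hFnn
  -- rewriting g1, g2
  have hg1eq : ∀ n : ℕ, g1 n = 2 ^ (-s) * (1 / ((n:ℝ) + (c+1)/2) ^ s) := by
    intro n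
    have h2 : (c + 2*(n:ℝ) + 1) = 2 * ((n:ℝ) + (c+1)/2) := by ring
    simp only [hg1]
    rw [h2, Real.mul_rpow (by norm_num) (by positivity), Real.rpow_neg (by norm_num)]
    field_simp
  have hg2eq : ∀ n : ℕ, g2 n = 2 ^ (-s) * (1 / ((n:ℝ) + (c+2)/2) ^ s) := by
    intro n
    have h2 : (c + 2*(n:ℝ) + 2) = 2 * ((n:ℝ) + (c+2)/2) := by ring
    simp only [hg2]
    rw [h2, Real.mul_rpow (by norm_num) (by positivity), Real.rpow_neg (by norm_num)]
    field_simp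
  have hs1 : Summable g1 :=
    ((summable_aux hs (q := (c+1)/2) (by linarith)).mul_left _).congr
      (fun n => (hg1eq n).symm)
  have hs2 : Summable g2 :=
    ((summable_aux hs (q := (c+2)/2) (by linarith)).mul_left _).congr
      (fun n => (hg2eq n).symm)
  -- even/odd splitting
  have heo : (∑' n, g1 n) + (∑' n, g2 n) = hurwitzZetaReal s (c+1) := by
    have hfg1 : ∀ n : ℕ, (fun m : ℕ => 1 / ((m:ℝ) + (c+1)) ^ s) (2*n) = g1 n := by
      intro n
      simp only [hg1]
      rw [show ((2*n:ℕ):ℝ) + (c+1) = c + 2*(n:ℝ) + 1 by push_cast; ring]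
    have hfg2 : ∀ n : ℕ, (fun m : ℕ => 1 / ((m:ℝ) + (c+1)) ^ s) (2*n+1) = g2 n := by
      intro n
      simp only [hg2]
      rw [show ((2*n+1:ℕ):ℝ) + (c+1) = c + 2*(n:ℝ) + 2 by push_cast; ring]
    have he : Summable (fun n : ℕ => (fun m : ℕ => 1 / ((m:ℝ) + (c+1)) ^ s) (2*n)) :=
      hs1.congr (fun n => (hfg1 n).symm)
    have ho : Summable (fun n : ℕ => (fun m : ℕ => 1 / ((m:ℝ) + (c+1)) ^ s) (2*n+1)) :=
      hs2.congr (fun n => (hfg2 n).symm)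
    have h := tsum_even_add_odd (f := fun m : ℕ => 1 / ((m:ℝ) + (c+1)) ^ s) he ho
    rw [tsum_congr hfg1, tsum_congr hfg2] at h
    rw [h, hurwitzZetaReal]
  have hsumnorm : Summable (fun n : ℕ => ∫ ξ in Set.Ioi (0:ℝ), ‖F n ξ‖) :=
    (((hs1.sub hs2).mul_left (Real.Gamma s))).congr (fun n => (hnorm n).symm)
  have hg1tsum : (∑' n, g1 n) = 2 ^ (-s) * hurwitzZetaReal s ((c+1)/2) := by
    rw [tsum_congr hg1eq, tsum_mul_left, hurwitzZetaReal]
  have hg2tsum : (∑' n, g2 n)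
      = hurwitzZetaReal s (c+1) - 2 ^ (-s) * hurwitzZetaReal s ((c+1)/2) := by
    rw [← heo, hg1tsum]; ring
  have h2pow : (2:ℝ) ^ (-(k:ℝ)/2) = 2 * (2:ℝ) ^ (-s) := by
    rw [show -s = (-1) + (-((k:ℝ)/2)) by rw [hsdef, hpdef]; ring,
      Real.rpow_add two_pos, Real.rpow_neg_one,
      show -(k:ℝ)/2 = -((k:ℝ)/2) by ring]
    ring
  calc (∫ ξ in Set.Ioi (0:ℝ), Real.exp (-c * ξ) * ξ ^ p / (1 + Real.exp ξ))
      = ∫ ξ in Set.Ioi (0:ℝ), ∑' n, F n ξ :=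
        setIntegral_congr_fun measurableSet_Ioi (fun ξ hξ => (hptwise ξ hξ).symm)
    _ = ∑' n, ∫ ξ in Set.Ioi (0:ℝ), F n ξ :=
        (integral_tsum_of_summable_integral_norm hFint hsumnorm).symm
    _ = Real.Gamma s * ((∑' n, g1 n) - (∑' n, g2 n)) := by
        rw [tsum_congr hIntF, tsum_mul_left, hs1.tsum_sub hs2]
    _ = Real.Gamma s *
        ((2:ℝ) ^ (-(k:ℝ)/2) * hurwitzZetaReal s ((c + 1) / 2) - hurwitzZetaReal s (c + 1)) := by
        rw [hg1tsum, hg2tsum, h2pow]; ring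
end

section
/- For all real numbers a, b and every real number c ≥ 0, the integral of (a − b·e^{−cξ})·ξ^{1/2}/(1+e^{ξ}) over ξ from 0 to ∞ equals Γ(3/2)·[a·(1−2^{−1/2})·ζ(3/2) − b·(2^{−1/2}·ζ(3/2, (c+1)/2) − ζ(3/2, c+1))], where ζ(s) is the Riemann zeta function and ζ(s, q) the Hurwitz zeta function. -/
open MeasureTheory Set Filter

namespace FD

lemma summable_F {q : ℝ} (hq : 0 < q) :
    Summable (fun n : ℕ => 1 / ((n : ℝ) + q) ^ (3 / 2 : ℝ)) := by
  have h := (Real.summable_one_div_nat_add_rpow q (3 / 2)).mpr (by norm_num)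
  refine h.congr fun n => ?_
  rw [abs_of_pos (by positivity)]

lemma term_double {x : ℝ} (hx : 0 < x) :
    1 / (2 * x) ^ (3 / 2 : ℝ) = 2 ^ (-(3 / 2) : ℝ) * (1 / x ^ (3 / 2 : ℝ)) := by
  rw [Real.mul_rpow (by norm_num) hx.le, Real.rpow_neg (by norm_num)]
  field_simp

lemma F_split {q : ℝ} (hq : 0 < q) :
    hurwitzZetaReal (3 / 2) q =
      2 ^ (-(3 / 2) : ℝ) *
        (hurwitzZetaReal (3 / 2) (q / 2) + hurwitzZetaReal (3 / 2) ((q + 1) / 2)) := by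
  unfold hurwitzZetaReal
  have he : ∀ k : ℕ, 1 / (((2 * k : ℕ) : ℝ) + q) ^ (3 / 2 : ℝ)
      = 2 ^ (-(3 / 2) : ℝ) * (1 / ((k : ℝ) + q / 2) ^ (3 / 2 : ℝ)) := fun k => by
    rw [show ((2 * k : ℕ) : ℝ) + q = 2 * ((k : ℝ) + q / 2) by push_cast; ring,
      term_double (by positivity)]
  have ho : ∀ k : ℕ, 1 / (((2 * k + 1 : ℕ) : ℝ) + q) ^ (3 / 2 : ℝ)
      = 2 ^ (-(3 / 2) : ℝ) * (1 / ((k : ℝ) + (q + 1) / 2) ^ (3 / 2 : ℝ)) := fun k => by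
    rw [show ((2 * k + 1 : ℕ) : ℝ) + q = 2 * ((k : ℝ) + (q + 1) / 2) by push_cast; ring,
      term_double (by positivity)]
  have hse : Summable fun k : ℕ => 1 / (((2 * k : ℕ) : ℝ) + q) ^ (3 / 2 : ℝ) :=
    ((summable_F (q := q / 2) (by positivity)).mul_left _).congr fun k => (he k).symm
  have hso : Summable fun k : ℕ => 1 / (((2 * k + 1 : ℕ) : ℝ) + q) ^ (3 / 2 : ℝ) :=
    ((summable_F (q := (q + 1) / 2) (by positivity)).mul_left _).congr fun k => (ho k).symm
  rw [← tsum_even_add_odd (f := fun n : ℕ => 1 / ((n : ℝ) + q) ^ (3 / 2 : ℝ)) hse hso]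
  simp_rw [he, ho, tsum_mul_left]
  ring

lemma T_eq {c : ℝ} (hc : 0 ≤ c) :
    (∑' n : ℕ, (-1 : ℝ) ^ n / ((n : ℝ) + 1 + c) ^ (3 / 2 : ℝ)) =
      2 ^ (-(3 / 2) : ℝ) *
        (hurwitzZetaReal (3 / 2) ((c + 1) / 2) - hurwitzZetaReal (3 / 2) ((c + 2) / 2)) := by
  unfold hurwitzZetaReal
  have he : ∀ k : ℕ, (-1 : ℝ) ^ (2 * k) / (((2 * k : ℕ) : ℝ) + 1 + c) ^ (3 / 2 : ℝ)
      = 2 ^ (-(3 / 2) : ℝ) * (1 / ((k : ℝ) + (c + 1) / 2) ^ (3 / 2 : ℝ)) := fun k => by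
    rw [show (-1 : ℝ) ^ (2 * k) = 1 by rw [pow_mul]; norm_num,
      show ((2 * k : ℕ) : ℝ) + 1 + c = 2 * ((k : ℝ) + (c + 1) / 2) by push_cast; ring,
      term_double (by positivity)]
  have ho : ∀ k : ℕ, (-1 : ℝ) ^ (2 * k + 1) / (((2 * k + 1 : ℕ) : ℝ) + 1 + c) ^ (3 / 2 : ℝ)
      = -(2 ^ (-(3 / 2) : ℝ) * (1 / ((k : ℝ) + (c + 2) / 2) ^ (3 / 2 : ℝ))) := fun k => by
    rw [show (-1 : ℝ) ^ (2 * k + 1) = -1 by rw [pow_succ, pow_mul]; norm_num,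
      show ((2 * k + 1 : ℕ) : ℝ) + 1 + c = 2 * ((k : ℝ) + (c + 2) / 2) by push_cast; ring,
      neg_div, term_double (by positivity)]
  have hse : Summable fun k : ℕ =>
      (-1 : ℝ) ^ (2 * k) / (((2 * k : ℕ) : ℝ) + 1 + c) ^ (3 / 2 : ℝ) :=
    ((summable_F (q := (c + 1) / 2) (by positivity)).mul_left _).congr fun k => (he k).symm
  have hso : Summable fun k : ℕ =>
      (-1 : ℝ) ^ (2 * k + 1) / (((2 * k + 1 : ℕ) : ℝ) + 1 + c) ^ (3 / 2 : ℝ) :=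
    (((summable_F (q := (c + 2) / 2) (by positivity)).mul_left _).neg).congr
      fun k => (ho k).symm
  rw [← tsum_even_add_odd (f := fun n : ℕ =>
      (-1 : ℝ) ^ n / ((n : ℝ) + 1 + c) ^ (3 / 2 : ℝ)) hse hso]
  simp_rw [he, ho, tsum_neg, tsum_mul_left]
  ring

lemma hint {r : ℝ} (hr : 0 < r) :
    IntegrableOn (fun ξ : ℝ => ξ ^ ((1 : ℝ) / 2) * Real.exp (-(r * ξ))) (Ioi 0) := by
  have h := integrableOn_rpow_mul_exp_neg_mul_rpow (p := 1) (s := 1 / 2) (b := r)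
    (by norm_num) one_pos hr
  simpa [Real.rpow_one, neg_mul] using h

lemma hval {r : ℝ} (hr : 0 < r) :
    ∫ ξ in Ioi (0 : ℝ), ξ ^ ((1 : ℝ) / 2) * Real.exp (-(r * ξ))
      = Real.Gamma (3 / 2) / r ^ (3 / 2 : ℝ) := by
  have h := Real.integral_rpow_mul_exp_neg_mul_Ioi (a := 3 / 2) (r := r) (by norm_num) hr
  norm_num at h
  rw [h, Real.inv_rpow hr.le]
  ring

noncomputable def f (c : ℝ) (n : ℕ) (ξ : ℝ) : ℝ :=
  (-1 : ℝ) ^ n * (ξ ^ ((1 : ℝ) / 2) * Real.exp (-(((n : ℝ) + 1 + c) * ξ)))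

lemma f_eq (c : ℝ) (n : ℕ) (ξ : ℝ) :
    f c n ξ = (ξ ^ ((1 : ℝ) / 2) * Real.exp (-((1 + c) * ξ))) * (-(Real.exp (-ξ))) ^ n := by
  unfold f
  rw [neg_pow (Real.exp (-ξ)) n, ← Real.exp_nat_mul]
  rw [show -(((n : ℝ) + 1 + c) * ξ) = (n : ℝ) * (-ξ) + -((1 + c) * ξ) by ring, Real.exp_add]
  ring

lemma pointwise {c : ℝ} {ξ : ℝ} (hξ : 0 < ξ) :
    (∑' n : ℕ, f c n ξ) = ξ ^ ((1 : ℝ) / 2) * Real.exp (-(c * ξ)) / (1 + Real.exp ξ) := by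
  have hlt : ‖-(Real.exp (-ξ))‖ < 1 := by
    rw [norm_neg, Real.norm_eq_abs, abs_of_pos (Real.exp_pos _)]
    calc Real.exp (-ξ) < Real.exp 0 := Real.exp_lt_exp.mpr (by linarith)
    _ = 1 := Real.exp_zero
  simp_rw [f_eq]
  rw [tsum_mul_left, tsum_geometric_of_norm_lt_one hlt]
  rw [sub_neg_eq_add]
  have h1 : (0 : ℝ) < 1 + Real.exp (-ξ) := by positivity
  have h2 : (0 : ℝ) < 1 + Real.exp ξ := by positivity
  rw [Real.exp_neg ξ, show -((1 + c) * ξ) = -(c * ξ) + -ξ by ring, Real.exp_add,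
    Real.exp_neg ξ]
  field_simp
  ring

lemma f_integrable {c : ℝ} (hc : 0 ≤ c) (n : ℕ) : IntegrableOn (f c n) (Ioi 0) := by
  unfold f
  exact (hint (r := (n : ℝ) + 1 + c) (by positivity)).const_mul _

lemma f_norm {c : ℝ} (hc : 0 ≤ c) (n : ℕ) :
    (∫⁻ ξ in Ioi (0 : ℝ), ‖f c n ξ‖₊)
      = ENNReal.ofReal (Real.Gamma (3 / 2) / ((n : ℝ) + 1 + c) ^ (3 / 2 : ℝ)) := by
  erw [← ofReal_integral_norm_eq_lintegral_enorm (f_integrable hc n)]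
  congr 1
  rw [setIntegral_congr_fun measurableSet_Ioi
    (g := fun ξ : ℝ => ξ ^ ((1 : ℝ) / 2) * Real.exp (-(((n : ℝ) + 1 + c) * ξ)))
    (fun ξ hξ => by
      have h0 : (0 : ℝ) < ξ := hξ
      simp [f, Real.norm_eq_abs, abs_mul, abs_of_nonneg (Real.rpow_nonneg h0.le _),
        abs_of_nonneg (Real.exp_pos _).le])]
  exact hval (by positivity)

lemma key {c : ℝ} (hc : 0 ≤ c) :
    (∫ ξ in Ioi (0 : ℝ), ξ ^ ((1 : ℝ) / 2) * Real.exp (-(c * ξ)) / (1 + Real.exp ξ))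
      = Real.Gamma (3 / 2) * ∑' n : ℕ, (-1 : ℝ) ^ n / ((n : ℝ) + 1 + c) ^ (3 / 2 : ℝ) := by
  have hmeas : ∀ n : ℕ, AEStronglyMeasurable (f c n) (volume.restrict (Ioi 0)) := by
    intro n
    have hcont : Continuous (f c n) := by unfold f; fun_prop (disch := norm_num)
    exact hcont.aestronglyMeasurable
  have hsum : Summable (fun n : ℕ => Real.Gamma (3 / 2) / ((n : ℝ) + 1 + c) ^ (3 / 2 : ℝ)) := by
    refine ((summable_F (q := 1 + c) (by positivity)).mul_left (Real.Gamma (3 / 2))).congr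
      fun n => ?_
    rw [mul_one_div, add_assoc]
  have hfin : (∑' n : ℕ, ∫⁻ ξ in Ioi (0 : ℝ), ‖f c n ξ‖₊) ≠ ⊤ := by
    simp_rw [f_norm hc]
    rw [← ENNReal.ofReal_tsum_of_nonneg (fun n => by positivity) hsum]
    exact ENNReal.ofReal_ne_top
  have h := integral_tsum hmeas hfin
  rw [setIntegral_congr_fun measurableSet_Ioi
    (g := fun ξ : ℝ => ∑' n : ℕ, f c n ξ) (fun ξ hξ => (pointwise hξ).symm), h]
  have hint' : ∀ n : ℕ, (∫ ξ in Ioi (0 : ℝ), f c n ξ)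
      = Real.Gamma (3 / 2) * ((-1 : ℝ) ^ n / ((n : ℝ) + 1 + c) ^ (3 / 2 : ℝ)) := by
    intro n
    unfold f
    rw [integral_const_mul, hval (r := (n : ℝ) + 1 + c) (by positivity)]
    ring
  simp_rw [hint']
  rw [tsum_mul_left]

lemma glam_integrable {l : ℝ} (hl : 0 ≤ l) :
    IntegrableOn (fun ξ : ℝ => ξ ^ ((1 : ℝ) / 2) * Real.exp (-(l * ξ)) / (1 + Real.exp ξ))
      (Ioi 0) := by
  refine Integrable.mono' (hint one_pos) ?_ ?_
  · have hcont : Continuous fun ξ : ℝ =>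
        ξ ^ ((1 : ℝ) / 2) * Real.exp (-(l * ξ)) / (1 + Real.exp ξ) := by
      have h1 : ∀ x : ℝ, 1 + Real.exp x ≠ 0 := fun x => by positivity
      have hnum : Continuous fun ξ : ℝ => ξ ^ ((1 : ℝ) / 2) * Real.exp (-(l * ξ)) := by
        fun_prop (disch := norm_num)
      have hden : Continuous fun ξ : ℝ => 1 + Real.exp ξ := by fun_prop
      exact hnum.div hden h1
    exact hcont.aestronglyMeasurable
  · filter_upwards [ae_restrict_mem measurableSet_Ioi] with ξ hξ
    have h0 : (0 : ℝ) < ξ := hξ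
    have hx : (0 : ℝ) ≤ ξ ^ ((1 : ℝ) / 2) := Real.rpow_nonneg h0.le _
    have e1 : Real.exp (-(l * ξ)) ≤ 1 := by
      calc Real.exp (-(l * ξ)) ≤ Real.exp 0 := Real.exp_le_exp.mpr (by nlinarith)
      _ = 1 := Real.exp_zero
    have e2 : Real.exp (-ξ) * Real.exp ξ = 1 := by
      rw [← Real.exp_add]; simp
    have e3 : (0 : ℝ) ≤ Real.exp (-ξ) := (Real.exp_pos _).le
    rw [Real.norm_eq_abs, abs_div, abs_mul, abs_of_nonneg hx,
      abs_of_nonneg (Real.exp_pos _).le,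
      abs_of_nonneg (by positivity : (0 : ℝ) ≤ 1 + Real.exp ξ), one_mul,
      div_le_iff₀ (by positivity)]
    nlinarith [mul_le_mul_of_nonneg_left e1 hx, mul_nonneg hx e3]

lemma main_real (a b c : ℝ) (hc : 0 ≤ c) :
    (∫ ξ in Ioi (0 : ℝ),
        (a - b * Real.exp (-c * ξ)) * ξ ^ ((1 : ℝ) / 2) / (1 + Real.exp ξ))
      = Real.Gamma (3 / 2) *
          (a * (1 - 2 ^ (-(1 : ℝ) / 2)) * hurwitzZetaReal (3 / 2) 1 -
            b * (2 ^ (-(1 : ℝ) / 2) * hurwitzZetaReal (3 / 2) ((c + 1) / 2) -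
              hurwitzZetaReal (3 / 2) (c + 1))) := by
  have hsplit : ∀ ξ : ℝ,
      (a - b * Real.exp (-c * ξ)) * ξ ^ ((1 : ℝ) / 2) / (1 + Real.exp ξ)
        = a * (ξ ^ ((1 : ℝ) / 2) * Real.exp (-(0 * ξ)) / (1 + Real.exp ξ))
          - b * (ξ ^ ((1 : ℝ) / 2) * Real.exp (-(c * ξ)) / (1 + Real.exp ξ)) := by
    intro ξ
    rw [neg_mul]
    simp only [zero_mul, neg_zero, Real.exp_zero, mul_one]
    ring
  rw [integral_congr_ae (ae_of_all _ hsplit),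
    integral_sub ((glam_integrable le_rfl).const_mul a) ((glam_integrable hc).const_mul b),
    integral_const_mul, integral_const_mul, key le_rfl, key hc,
    T_eq le_rfl, T_eq hc,
    show ((0 : ℝ) + 1) / 2 = 1 / 2 by norm_num, show ((0 : ℝ) + 2) / 2 = 1 by norm_num]
  have h1 : hurwitzZetaReal (3 / 2) 1 =
      2 ^ (-(3 / 2) : ℝ) * (hurwitzZetaReal (3 / 2) (1 / 2) + hurwitzZetaReal (3 / 2) 1) := by
    have := F_split (q := 1) one_pos
    rwa [show ((1 : ℝ) + 1) / 2 = 1 by norm_num] at this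
  have h2 : hurwitzZetaReal (3 / 2) (c + 1) =
      2 ^ (-(3 / 2) : ℝ) *
        (hurwitzZetaReal (3 / 2) ((c + 1) / 2) + hurwitzZetaReal (3 / 2) ((c + 2) / 2)) := by
    have := F_split (q := c + 1) (by linarith)
    rwa [show ((c + 1 : ℝ) + 1) / 2 = (c + 2) / 2 by ring] at this
  have hu : (2 : ℝ) ^ (-(1 : ℝ) / 2) = 2 * 2 ^ (-(3 / 2) : ℝ) := by
    rw [show (-(1 : ℝ) / 2) = 1 + (-(3 / 2) : ℝ) by norm_num, Real.rpow_add two_pos,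
      Real.rpow_one]
  linear_combination (-(a * Real.Gamma (3 / 2))) * h1 - (b * Real.Gamma (3 / 2)) * h2 +
    (Real.Gamma (3 / 2) * (a * hurwitzZetaReal (3 / 2) 1 +
      b * hurwitzZetaReal (3 / 2) ((c + 1) / 2))) * hu

lemma zeta_cast : (hurwitzZetaReal (3 / 2) 1 : ℂ) = riemannZeta (3 / 2) := by
  have hs : (1 : ℝ) < ((3 / 2 : ℂ)).re := by norm_num
  rw [zeta_eq_tsum_one_div_nat_add_one_cpow hs]
  unfold hurwitzZetaReal
  rw [Complex.ofReal_tsum]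
  congr 1
  ext n
  rw [Complex.ofReal_div, Complex.ofReal_cpow (by positivity)]
  push_cast
  norm_num

end FD

/-- for real a, b and real c ≥ 0,
∫_0^∞ (a − b·e^{−cξ})·ξ^{1/2}/(1+e^ξ) dξ
  = Γ(3/2)·[a·(1−2^{−1/2})·ζ(3/2) − b·(2^{−1/2}·ζ(3/2,(c+1)/2) − ζ(3/2,c+1))]. -/
theorem fermiDirac_half_model (a b c : ℝ) (hc : 0 ≤ c) :
    ((∫ ξ in Set.Ioi (0 : ℝ),
        (a - b * Real.exp (-c * ξ)) * ξ ^ ((1 : ℝ) / 2) / (1 + Real.exp ξ) : ℝ) : ℂ) =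
      (Real.Gamma (3 / 2) : ℂ) *
        ((a : ℂ) * (1 - ((2 : ℝ) ^ (-(1 : ℝ) / 2) : ℝ)) * riemannZeta (3 / 2) -
          (b : ℂ) * (((2 : ℝ) ^ (-(1 : ℝ) / 2) : ℝ) *
              (hurwitzZetaReal (3 / 2) ((c + 1) / 2) : ℂ) -
            (hurwitzZetaReal (3 / 2) (c + 1) : ℂ))) := by
  rw [← FD.zeta_cast, FD.main_real a b c hc]
  push_cast
  ring
end

section
/- For every natural number k ≥ 1 and every real number c ≥ 0, the integral of e^{−cξ}·ξ^{k/2}/(1+e^{ξ}) over ξ from 0 to ∞ equals Γ(1+k/2)·Σ_{n=0}^∞ (−1)^n/(c+1+n)^{1+k/2}. -/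
open MeasureTheory Set Real


/-- for natural k ≥ 1 and real c ≥ 0,
∫_0^∞ e^{−cξ}·ξ^{k/2}/(1+e^ξ) dξ = Γ(1+k/2)·Σ_{n=0}^∞ (−1)^n/(c+1+n)^{1+k/2}. -/
theorem fermiDirac_general_exp_series (k : ℕ) (hk : 1 ≤ k) (c : ℝ) (hc : 0 ≤ c) :
    (∫ ξ in Set.Ioi (0 : ℝ), Real.exp (-c * ξ) * ξ ^ ((k : ℝ) / 2) / (1 + Real.exp ξ)) =
      Real.Gamma (1 + (k : ℝ) / 2) *
        ∑' n : ℕ, (-1 : ℝ) ^ n / (c + 1 + (n : ℝ)) ^ (1 + (k : ℝ) / 2) := by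
  set s : ℝ := 1 + (k : ℝ) / 2 with hs_def
  have hk2 : (0:ℝ) < (k:ℝ)/2 := by positivity
  have hs : (0:ℝ) < s := by positivity
  have hs1 : (1:ℝ) < s := by
    rw [hs_def]
    have : (1:ℝ) ≤ (k:ℝ) := by exact_mod_cast hk
    linarith
  have hsre : (0:ℝ) < ((s : ℂ)).re := by simpa using hs
  set F : ℝ → ℂ := fun t ↦ ((Real.exp (-c * t) / (1 + Real.exp t) : ℝ) : ℂ) with hF_def
  have hpn : ∀ n : ℕ, (0:ℝ) < c + 1 + n := fun n ↦ by positivity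
  -- pointwise geometric series
  have hF : ∀ t ∈ Ioi (0:ℝ), HasSum
      (fun n : ℕ ↦ ((-1 : ℂ)) ^ n * Real.exp (-(c + 1 + n) * t)) (F t) := by
    intro t ht
    rw [mem_Ioi] at ht
    have hr : ‖(-Real.exp (-t))‖ < 1 := by
      rw [norm_neg, Real.norm_eq_abs, abs_of_pos (Real.exp_pos _)]
      exact Real.exp_lt_one_iff.mpr (by linarith)
    have h1 : HasSum (fun n : ℕ ↦ (-Real.exp (-t)) ^ n * Real.exp (-(c+1) * t))
        ((1 - (-Real.exp (-t)))⁻¹ * Real.exp (-(c+1) * t)) :=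
      (hasSum_geometric_of_norm_lt_one hr).mul_right _
    have hfun : (fun n : ℕ ↦ ((-1:ℝ)) ^ n * Real.exp (-(c + 1 + n) * t)) =
        fun n : ℕ ↦ (-Real.exp (-t)) ^ n * Real.exp (-(c+1) * t) := by
      funext n
      rw [show (-(c + 1 + (n:ℝ))) * t = (n:ℝ) * (-t) + (-(c+1) * t) by ring, Real.exp_add,
        Real.exp_nat_mul, neg_pow]
      ring
    have hval : (1 - -Real.exp (-t))⁻¹ * Real.exp (-(c+1) * t) =
        Real.exp (-c * t) / (1 + Real.exp t) := by
      rw [sub_neg_eq_add]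
      have h3 : Real.exp (-(c+1)*t) = Real.exp (-c*t) * (Real.exp t)⁻¹ := by
        rw [← Real.exp_neg, ← Real.exp_add]; ring_nf
      have h4 : (0:ℝ) < Real.exp t := Real.exp_pos t
      rw [Real.exp_neg, h3]
      field_simp
      ring
    have h2 : HasSum (fun n : ℕ ↦ ((-1:ℝ)) ^ n * Real.exp (-(c + 1 + n) * t))
        (Real.exp (-c * t) / (1 + Real.exp t)) := by
      rw [hfun, ← hval]; exact h1
    have := Complex.hasSum_ofReal.mpr h2
    convert this using 2 with n
    push_cast
    ring
  -- summability
  have h_sum : Summable fun n : ℕ ↦ ‖((-1:ℂ))^n‖ / (c + 1 + (n:ℝ)) ^ ((s:ℂ)).re := by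
    have h0 : Summable (fun n : ℕ ↦ ((n:ℝ) ^ s)⁻¹) := Real.summable_nat_rpow_inv.mpr hs1
    have hp1 : Summable fun n : ℕ ↦ 1 / ((n:ℝ) + 1) ^ s := by
      refine (h0.comp_injective Nat.succ_injective).congr fun n ↦ ?_
      simp only [Function.comp_apply, one_div]
      push_cast [Nat.succ_eq_add_one]
      ring_nf
    apply hp1.of_nonneg_of_le (fun n ↦ by positivity)
    intro n
    simp only [norm_pow, norm_neg, norm_one, one_pow, Complex.ofReal_re]
    apply one_div_le_one_div_of_le (by positivity)
    apply Real.rpow_le_rpow (by positivity) (by linarith) hs.le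
  have key := hasSum_mellin (a := fun n : ℕ ↦ ((-1:ℂ))^n) (p := fun n : ℕ ↦ c + 1 + n)
    (F := F) (s := (s:ℂ)) (fun n ↦ Or.inr (hpn n)) hsre hF h_sum
  -- identify the mellin transform with the real integral
  have hmel : mellin F (s:ℂ) =
      ((∫ ξ in Set.Ioi (0 : ℝ), Real.exp (-c * ξ) * ξ ^ ((k : ℝ) / 2) / (1 + Real.exp ξ) : ℝ) : ℂ) := by
    rw [mellin]
    refine (setIntegral_congr_fun measurableSet_Ioi (fun t ht ↦ ?_)).trans integral_ofReal
    rw [mem_Ioi] at ht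
    have h5 : ((s:ℂ)) - 1 = ((((k:ℝ)/2 : ℝ)) : ℂ) := by push_cast [hs_def]; ring
    rw [smul_eq_mul, h5, ← Complex.ofReal_cpow ht.le, hF_def]
    push_cast [Complex.coe_algebraMap]
    ring
  rw [hmel] at key
  -- identify the terms
  have hterm : ∀ n : ℕ, Complex.Gamma (s:ℂ) * ((-1:ℂ))^n / ((c + 1 + (n:ℝ) : ℝ) : ℂ) ^ (s:ℂ) =
      ((Real.Gamma s * ((-1:ℝ))^n / (c + 1 + (n:ℝ)) ^ s : ℝ) : ℂ) := by
    intro n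
    rw [Complex.Gamma_ofReal, ← Complex.ofReal_cpow (hpn n).le]
    push_cast
    ring
  simp_rw [hterm] at key
  have keyR := Complex.hasSum_ofReal.mp key
  rw [← keyR.tsum_eq]
  simp_rw [mul_div_assoc]
  exact tsum_mul_left
end
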